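/- Define the α-synergy S^𝛂(X → Y) as the supremum of I(V;Y) over all channels p_{V|X} such that V - X - Y is a Markov chain and V is independent of X^{α_i} for all α_i in 𝛂. Then S^𝛂(X → Y) ≤ min_{j} I(Y; X^{-α_j} | X^{α_j}). -/

import Mathlib

open Finset
open scoped BigOperators Classical

/-- Shannon entropy (in bits) of a finite distribution. -/
noncomputable def H {A : Type*} [Fintype A] (p : A → ℝ) : ℝ :=
  ∑ a, (if p a = 0 then 0 else -(p a * Real.logb 2 (p a)))

/-- Shannon mutual information (in bits) of a finite joint distribution. -/
noncomputable def MI {A B : Type*} [Fintype A] [Fintype B] (p : A → B → ℝ) : ℝ :=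
  ∑ a, ∑ b,
    (if p a b = 0 then 0 else
      p a b * Real.logb 2 (p a b / ((∑ b', p a b') * (∑ a', p a' b))))

/-- Conditional mutual information `I(A; B | C)` of a finite joint distribution. -/
noncomputable def CMI {A B C : Type*} [Fintype A] [Fintype B] [Fintype C]
    (p : A → B → C → ℝ) : ℝ :=
  ∑ a, ∑ b, ∑ c,
    (if p a b c = 0 then 0 else
      p a b c * Real.logb 2
        ((p a b c * (∑ a', ∑ b', p a' b' c)) /
          ((∑ b', p a b' c) * (∑ a', p a' b c))))

def IsJoint {A B : Type*} [Fintype A] [Fintype B] (p : A → B → ℝ) : Prop :=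
  (∀ a b, 0 ≤ p a b) ∧ ∑ a, ∑ b, p a b = 1

def IsDist {A : Type*} [Fintype A] (p : A → ℝ) : Prop :=
  (∀ a, 0 ≤ p a) ∧ ∑ a, p a = 1

def IsChannel {A B : Type*} [Fintype A] [Fintype B] (c : A → B → ℝ) : Prop :=
  (∀ a b, 0 ≤ c a b) ∧ ∀ a, ∑ b, c a b = 1

/-- Given a joint distribution `q` of `(V, X)`, the pair `(V, f(X))` is independent. -/
def IndepWithFun {V X T : Type*} [Fintype V] [Fintype X] (q : V → X → ℝ) (f : X → T) : Prop :=
  ∀ v t, (∑ x, if f x = t then q v x else 0) =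
    (∑ x, q v x) * (∑ v', ∑ x, if f x = t then q v' x else 0)

/-- Markov chain `A - B - C`: conditional independence of `A` and `C` given `B`. -/
def MarkovChain {A B C : Type*} [Fintype A] [Fintype B] [Fintype C]
    (q : A → B → C → ℝ) : Prop :=
  ∀ a b c, q a b c * (∑ a', ∑ c', q a' b c') =
    (∑ c', q a b c') * (∑ a', q a' b c)

/-- Restriction `X^α` of a tuple to the coordinates in `α`. -/
def restr {n : ℕ} {𝓧 : Fin n → Type*} (α : Finset (Fin n)) (x : ∀ i, 𝓧 i) :
    ∀ i : α, 𝓧 i.1 := fun i => x i.1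

/-- The set of values `I(V;Y)` achievable through `𝛂`-synergistic channels `p_{V|X}`
(so that `V - X - Y` is a Markov chain and `V ⫫ X^α` for every `α ∈ A`). -/
def synSet {n : ℕ} {𝓧 : Fin n → Type*} [∀ i, Fintype (𝓧 i)] {Y : Type*} [Fintype Y]
    (p : (∀ i, 𝓧 i) → Y → ℝ) (A : Finset (Finset (Fin n))) : Set ℝ :=
  { r | ∃ (k : ℕ) (c : (∀ i, 𝓧 i) → Fin k → ℝ), IsChannel c ∧
      (∀ α ∈ A, IndepWithFun (fun v x => c x v * (∑ y, p x y)) (restr (𝓧 := 𝓧) α)) ∧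
      r = MI (fun (v : Fin k) (y : Y) => ∑ x, c x v * p x y) }

/-- Synergistic disclosure `S^𝛂(X → Y)`. -/
noncomputable def Syn {n : ℕ} {𝓧 : Fin n → Type*} [∀ i, Fintype (𝓧 i)] {Y : Type*} [Fintype Y]
    (p : (∀ i, 𝓧 i) → Y → ℝ) (A : Finset (Finset (Fin n))) : ℝ :=
  sSup (synSet p A)

/-- The joint distribution of the pair `(X, X)`, used for self-synergy `S^𝛂(X → X)`. -/
noncomputable def selfJoint {X : Type*} [Fintype X] (pX : X → ℝ) : X → X → ℝ :=
  fun x x' => if x' = x then pX x else 0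

set_option linter.unusedSectionVars false

section Aux

lemma logb_two_ge {x : ℝ} (hx : 0 < x) : (1 - x⁻¹) / Real.log 2 ≤ Real.logb 2 x := by
  rw [Real.logb]
  have h2 : (0:ℝ) < Real.log 2 := Real.log_pos (by norm_num)
  have h1 : 1 - x⁻¹ ≤ Real.log x := by
    have := Real.log_le_sub_one_of_pos (inv_pos.mpr hx)
    rw [Real.log_inv] at this
    linarith
  gcongr

lemma CMI_nonneg {A B C : Type*} [Fintype A] [Fintype B] [Fintype C]
    (p : A → B → C → ℝ) (hp : ∀ a b c, 0 ≤ p a b c) : 0 ≤ CMI p := by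
  classical
  set t : A → B → C → ℝ := fun a b c =>
    if p a b c = 0 then 0 else (∑ b', p a b' c) * (∑ a', p a' b c) / (∑ a', ∑ b', p a' b' c)
    with ht
  have h2 : (0:ℝ) < Real.log 2 := Real.log_pos (by norm_num)
  have hterm : ∀ a b c, (p a b c - t a b c) / Real.log 2 ≤
      (if p a b c = 0 then 0 else
        p a b c * Real.logb 2
          ((p a b c * (∑ a', ∑ b', p a' b' c)) /
            ((∑ b', p a b' c) * (∑ a', p a' b c)))) := by
    intro a b c
    by_cases h : p a b c = 0
    · simp [ht, h]
    · have hpos : 0 < p a b c := (hp a b c).lt_of_ne (Ne.symm h)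
      have hmA : 0 < ∑ b', p a b' c :=
        hpos.trans_le (Finset.single_le_sum (fun i _ => hp a i c) (mem_univ b))
      have hmB : 0 < ∑ a', p a' b c :=
        hpos.trans_le (Finset.single_le_sum (fun i _ => hp i b c) (mem_univ a))
      have hmC : 0 < ∑ a', ∑ b', p a' b' c :=
        hmA.trans_le (Finset.single_le_sum
          (f := fun a' => ∑ b', p a' b' c)
          (fun i _ => Finset.sum_nonneg (fun j _ => hp i j c)) (mem_univ a))
      have hG : 0 < (p a b c * (∑ a', ∑ b', p a' b' c)) /
          ((∑ b', p a b' c) * (∑ a', p a' b c)) :=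
        div_pos (mul_pos hpos hmC) (mul_pos hmA hmB)
      rw [if_neg h]
      have hlog := logb_two_ge hG
      have hmul := mul_le_mul_of_nonneg_left hlog hpos.le
      have hts : t a b c = p a b c *
          ((p a b c * (∑ a', ∑ b', p a' b' c)) /
            ((∑ b', p a b' c) * (∑ a', p a' b c)))⁻¹ := by
        rw [ht]; simp only [if_neg h]
        field_simp
      calc (p a b c - t a b c) / Real.log 2
          = p a b c * ((1 - ((p a b c * (∑ a', ∑ b', p a' b' c)) /
              ((∑ b', p a b' c) * (∑ a', p a' b c)))⁻¹) / Real.log 2) := by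
            rw [hts]; field_simp
        _ ≤ _ := hmul
  have hsumt : ∑ a, ∑ b, ∑ c, t a b c ≤ ∑ a, ∑ b, ∑ c, p a b c := by
    have reord : ∀ f : A → B → C → ℝ, ∑ a, ∑ b, ∑ c, f a b c = ∑ c, ∑ a, ∑ b, f a b c := by
      intro f
      have h1 : ∀ a, ∑ b, ∑ c, f a b c = ∑ c, ∑ b, f a b c := fun a => Finset.sum_comm
      simp_rw [h1]
      exact Finset.sum_comm
    rw [reord t, reord p]
    apply Finset.sum_le_sum
    intro c _
    set S := ∑ a, ∑ b, p a b c with hS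
    have hSnn : 0 ≤ S := Finset.sum_nonneg (fun a _ => Finset.sum_nonneg (fun b _ => hp a b c))
    have hstep : ∑ a, ∑ b, t a b c ≤ ∑ a, ∑ b, (∑ b', p a b' c) * (∑ a', p a' b c) / S := by
      apply Finset.sum_le_sum; intro a _; apply Finset.sum_le_sum; intro b _
      by_cases h : p a b c = 0
      · simp only [ht, if_pos h]
        apply div_nonneg (mul_nonneg ?_ ?_) hSnn <;>
          exact Finset.sum_nonneg (fun i _ => hp _ _ _)
      · simp only [ht, if_neg h, ← hS]
        exact le_refl _
    refine hstep.trans ?_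
    have hsplit : ∀ a, ∑ b, (∑ b', p a b' c) * (∑ a', p a' b c) / S =
        (∑ b', p a b' c) * ((∑ b, ∑ a', p a' b c) / S) := by
      intro a; rw [← Finset.sum_div, ← Finset.mul_sum, mul_div_assoc]
    simp_rw [hsplit]
    rw [← Finset.sum_mul]
    have hBB : ∑ b, ∑ a', p a' b c = S := Finset.sum_comm
    rw [hBB, ← hS]
    rcases eq_or_lt_of_le hSnn with h0 | h0
    · rw [← h0]; simp
    · rw [div_self h0.ne', mul_one]
  have hfin : (∑ a, ∑ b, ∑ c, p a b c - ∑ a, ∑ b, ∑ c, t a b c) / Real.log 2 ≤ CMI p := by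
    rw [CMI]
    have : ∑ a, ∑ b, ∑ c, ((p a b c - t a b c) / Real.log 2) =
        (∑ a, ∑ b, ∑ c, p a b c - ∑ a, ∑ b, ∑ c, t a b c) / Real.log 2 := by
      simp only [← Finset.sum_div, ← Finset.sum_sub_distrib]
    rw [← this]
    exact Finset.sum_le_sum (fun a _ => Finset.sum_le_sum (fun b _ =>
      Finset.sum_le_sum (fun c _ => hterm a b c)))
  have : 0 ≤ (∑ a, ∑ b, ∑ c, p a b c - ∑ a, ∑ b, ∑ c, t a b c) / Real.log 2 :=
    div_nonneg (by linarith) h2.le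
  linarith

end Aux

section Glue

variable {n : ℕ} {𝓧 : Fin n → Type*} [∀ i, Fintype (𝓧 i)]

noncomputable def glue (α : Finset (Fin n)) (b : ∀ i : ↥αᶜ, 𝓧 i.1) (a : ∀ i : ↥α, 𝓧 i.1) :
    ∀ i, 𝓧 i := fun i => if h : i ∈ α then a ⟨i, h⟩ else b ⟨i, by simpa using h⟩

lemma restr_glue_mem (α : Finset (Fin n)) (b : ∀ i : ↥αᶜ, 𝓧 i.1) (a : ∀ i : ↥α, 𝓧 i.1) :
    restr α (glue α b a) = a := by
  funext i; exact dif_pos i.2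

lemma restr_glue_compl (α : Finset (Fin n)) (b : ∀ i : ↥αᶜ, 𝓧 i.1) (a : ∀ i : ↥α, 𝓧 i.1) :
    restr αᶜ (glue α b a) = b := by
  funext i
  have h : ¬ (i.1 ∈ α) := Finset.mem_compl.mp i.2
  simp only [restr, glue, dif_neg h]

lemma eq_glue_iff (α : Finset (Fin n)) (b : ∀ i : ↥αᶜ, 𝓧 i.1) (a : ∀ i : ↥α, 𝓧 i.1)
    (x : ∀ i, 𝓧 i) : (restr αᶜ x = b ∧ restr α x = a) ↔ x = glue α b a := by
  constructor
  · rintro ⟨hb, ha⟩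
    funext i
    by_cases h : i ∈ α
    · have := congrFun ha ⟨i, h⟩
      simpa [restr, glue, dif_pos h] using this
    · have hc : i ∈ αᶜ := by simpa using h
      have := congrFun hb ⟨i, hc⟩
      simpa [restr, glue, dif_neg h] using this
  · rintro rfl
    exact ⟨restr_glue_compl α b a, restr_glue_mem α b a⟩

noncomputable def glueEquiv (α : Finset (Fin n)) :
    ((∀ i : ↥αᶜ, 𝓧 i.1) × (∀ i : ↥α, 𝓧 i.1)) ≃ (∀ i, 𝓧 i) where
  toFun ba := glue α ba.1 ba.2
  invFun x := (restr αᶜ x, restr α x)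
  left_inv := fun ba => by
    simp [restr_glue_compl, restr_glue_mem]
  right_inv := fun x => by
    funext i
    by_cases h : i ∈ α <;> simp [glue, restr, h]

lemma sum_glue_all (α : Finset (Fin n)) (g : (∀ i, 𝓧 i) → ℝ) :
    ∑ b, ∑ a, g (glue α b a) = ∑ x, g x := by
  rw [← (glueEquiv (𝓧 := 𝓧) α).sum_comp g, Fintype.sum_prod_type]
  rfl

lemma sum_point (α : Finset (Fin n)) (b : ∀ i : ↥αᶜ, 𝓧 i.1) (a : ∀ i : ↥α, 𝓧 i.1)
    (f : (∀ i, 𝓧 i) → ℝ) :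
    (∑ x, if restr αᶜ x = b ∧ restr α x = a then f x else 0) = f (glue α b a) := by
  rw [Finset.sum_congr rfl (fun x _ => by rw [if_congr (eq_glue_iff α b a x) rfl rfl])]
  simp [Finset.sum_ite_eq']

lemma sum_fiber (α : Finset (Fin n)) (a : ∀ i : ↥α, 𝓧 i.1) (g : (∀ i, 𝓧 i) → ℝ) :
    (∑ x, if restr α x = a then g x else 0) = ∑ b, g (glue α b a) := by
  rw [← sum_glue_all α (fun x => if restr α x = a then g x else 0)]
  congr 1
  funext b
  rw [Finset.sum_congr rfl (fun a' _ => by rw [restr_glue_mem])]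
  · exact (Finset.sum_ite_eq' univ a (fun a' => g (glue α b a'))).trans (by simp)

end Glue

section Key

variable {n : ℕ} {𝓧 : Fin n → Type*} [∀ i, Fintype (𝓧 i)] {Y : Type*} [Fintype Y]
variable (p : (∀ i, 𝓧 i) → Y → ℝ) (α : Finset (Fin n)) {k : ℕ} (c : (∀ i, 𝓧 i) → Fin k → ℝ)

noncomputable def pXf : (∀ i, 𝓧 i) → ℝ := fun x => ∑ y, p x y
noncomputable def pYf : Y → ℝ := fun y => ∑ x, p x y
noncomputable def qf : Fin k → Y → ℝ := fun v y => ∑ x, c x v * p x y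
noncomputable def qVf : Fin k → ℝ := fun v => ∑ y, qf p c v y
noncomputable def pAf : (∀ i : ↥α, 𝓧 i.1) → ℝ :=
  fun a => ∑ x, if restr α x = a then pXf p x else 0
noncomputable def pYAf : Y → (∀ i : ↥α, 𝓧 i.1) → ℝ :=
  fun y a => ∑ x, if restr α x = a then p x y else 0
noncomputable def LMf : Fin k → Y → ℝ :=
  fun v y => Real.logb 2 (qf p c v y / (qVf p c v * pYf p y))
noncomputable def LCf : (∀ i, 𝓧 i) → Y → ℝ :=
  fun x y => Real.logb 2 ((p x y * pAf p α (restr α x)) / (pYAf p α y (restr α x) * pXf p x))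
noncomputable def sf : (∀ i, 𝓧 i) → Y → Fin k → ℝ :=
  fun x y v => c x v * pXf p x * pYAf p α y (restr α x) * qf p c v y /
    (pAf p α (restr α x) * qVf p c v * pYf p y)

set_option maxHeartbeats 2000000 in
lemma key_lemma (hp : IsJoint p) (hc : IsChannel c)
    (hind : IndepWithFun (fun v x => c x v * (∑ y, p x y)) (restr (𝓧 := 𝓧) α)) :
    MI (fun (v : Fin k) (y : Y) => ∑ x, c x v * p x y) ≤
    CMI (fun (y : Y) (b : ∀ i : ↥αᶜ, 𝓧 i.1) (a : ∀ i : ↥α, 𝓧 i.1) =>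
        ∑ x, if restr αᶜ x = b ∧ restr α x = a then p x y else 0) := by
  classical
  have hpnn : ∀ x y, 0 ≤ p x y := hp.1
  have hcnn : ∀ x v, 0 ≤ c x v := hc.1
  have hcrow : ∀ x, ∑ v, c x v = 1 := hc.2
  -- basic marginal identities
  have hqY : ∀ y, ∑ v, qf p c v y = pYf p y := by
    intro y
    show (∑ v, ∑ x, c x v * p x y) = ∑ x, p x y
    rw [Finset.sum_comm]
    apply Finset.sum_congr rfl
    intro x _
    rw [← Finset.sum_mul, hcrow x, one_mul]
  -- STEP 1 : rewrite the CMI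
  have hCMI : CMI (fun (y : Y) (b : ∀ i : ↥αᶜ, 𝓧 i.1) (a : ∀ i : ↥α, 𝓧 i.1) =>
        ∑ x, if restr αᶜ x = b ∧ restr α x = a then p x y else 0) =
      ∑ y, ∑ x, (if p x y = 0 then 0 else p x y * Real.logb 2
        ((p x y * pAf p α (restr α x)) / (pYAf p α y (restr α x) * pXf p x))) := by
    rw [CMI]
    apply Finset.sum_congr rfl
    intro y _
    rw [← sum_glue_all α (fun x => if p x y = 0 then 0 else p x y * Real.logb 2
        ((p x y * pAf p α (restr α x)) / (pYAf p α y (restr α x) * pXf p x)))]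
    apply Finset.sum_congr rfl
    intro b _
    apply Finset.sum_congr rfl
    intro a _
    have hE : ∀ y' b', (∑ x, if restr αᶜ x = b' ∧ restr α x = a then p x y' else 0)
        = p (glue α b' a) y' := fun y' b' => sum_point α b' a (fun x => p x y')
    have h13 : (∑ b', ∑ x, if restr αᶜ x = b' ∧ restr α x = a then p x y else 0)
        = pYAf p α y a := by
      simp_rw [hE y]
      exact (sum_fiber α a (fun x => p x y)).symm
    have h23 : (∑ y', ∑ x, if restr αᶜ x = b ∧ restr α x = a then p x y' else 0)
        = pXf p (glue α b a) := by
      simp_rw [hE _ b]; rfl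
    have h3 : (∑ y', ∑ b', ∑ x, if restr αᶜ x = b' ∧ restr α x = a then p x y' else 0)
        = pAf p α a := by
      simp_rw [hE]
      rw [Finset.sum_comm]
      have : ∀ b', ∑ y', p (glue α b' a) y' = pXf p (glue α b' a) := fun _ => rfl
      simp_rw [this]
      exact (sum_fiber α a (pXf p)).symm
    rw [hE y b, h13, h23, h3, restr_glue_mem α b a]
  -- STEP 2 : rewrite the MI
  have hMI : MI (fun (v : Fin k) (y : Y) => ∑ x, c x v * p x y) =
      ∑ v, ∑ y, qf p c v y * LMf p c v y := by
    rw [MI]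
    apply Finset.sum_congr rfl; intro v _
    apply Finset.sum_congr rfl; intro y _
    show (if qf p c v y = 0 then (0:ℝ) else qf p c v y *
        Real.logb 2 (qf p c v y / (qVf p c v * ∑ v', qf p c v' y))) =
      qf p c v y * LMf p c v y
    rw [hqY y]
    by_cases h : qf p c v y = 0
    · rw [if_pos h]
      have : qf p c v y * LMf p c v y = 0 := by rw [h, zero_mul]
      rw [this]
    · rw [if_neg h]
      rfl
  -- reorder lemma for triple sums
  have reord : ∀ f : Fin k → Y → (∀ i, 𝓧 i) → ℝ,
      ∑ v, ∑ y, ∑ x, f v y x = ∑ x, ∑ y, ∑ v, f v y x := by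
    intro f
    have h1 : ∀ v, ∑ y, ∑ x, f v y x = ∑ x, ∑ y, f v y x := fun v => Finset.sum_comm
    simp_rw [h1]
    rw [Finset.sum_comm]
    apply Finset.sum_congr rfl; intro x _
    exact Finset.sum_comm
  -- STEP 3 : lift both to triple sums
  have hMI3 : ∑ v, ∑ y, qf p c v y * LMf p c v y =
      ∑ x, ∑ y, ∑ v, (c x v * p x y) * LMf p c v y := by
    rw [← reord (fun v y x => (c x v * p x y) * LMf p c v y)]
    apply Finset.sum_congr rfl; intro v _
    apply Finset.sum_congr rfl; intro y _
    rw [← Finset.sum_mul]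
    rfl
  have hCMI3 : (∑ y, ∑ x, (if p x y = 0 then 0 else p x y * Real.logb 2
        ((p x y * pAf p α (restr α x)) / (pYAf p α y (restr α x) * pXf p x)))) =
      ∑ x, ∑ y, ∑ v, (c x v * p x y) * LCf p α x y := by
    rw [Finset.sum_comm]
    apply Finset.sum_congr rfl; intro x _
    apply Finset.sum_congr rfl; intro y _
    have hsum : ∑ v, (c x v * p x y) * LCf p α x y =
        p x y * LCf p α x y := by
      simp_rw [mul_assoc]
      rw [← Finset.sum_mul, hcrow x, one_mul]
    rw [hsum]
    by_cases h : p x y = 0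
    · rw [if_pos h, h, zero_mul]
    · rw [if_neg h]
      rfl
  -- STEP 4 : nonnegativity facts
  have hlog2 : (0:ℝ) < Real.log 2 := Real.log_pos (by norm_num)
  have hpXnn : ∀ x, 0 ≤ pXf p x := fun x => Finset.sum_nonneg fun y _ => hpnn x y
  have hpYnn : ∀ y, 0 ≤ pYf p y := fun y => Finset.sum_nonneg fun x _ => hpnn x y
  have hqnn : ∀ v y, 0 ≤ qf p c v y :=
    fun v y => Finset.sum_nonneg fun x _ => mul_nonneg (hcnn x v) (hpnn x y)
  have hqVnn : ∀ v, 0 ≤ qVf p c v := fun v => Finset.sum_nonneg fun y _ => hqnn v y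
  have hpAnn : ∀ a, 0 ≤ pAf p α a := fun a => Finset.sum_nonneg fun x _ => by
    split_ifs with h
    · exact hpXnn x
    · exact le_refl 0
  have hpYAnn : ∀ y a, 0 ≤ pYAf p α y a := fun y a => Finset.sum_nonneg fun x _ => by
    split_ifs with h
    · exact hpnn x y
    · exact le_refl 0
  have hsnn : ∀ x y v, 0 ≤ sf p α c x y v := by
    intro x y v
    apply div_nonneg
    · exact mul_nonneg (mul_nonneg (mul_nonneg (hcnn x v) (hpXnn x))
        (hpYAnn y (restr α x))) (hqnn v y)
    · exact mul_nonneg (mul_nonneg (hpAnn (restr α x)) (hqVnn v)) (hpYnn y)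
  -- STEP 5 : the per-term inequality
  have hterm : ∀ x y v, (c x v * p x y - sf p α c x y v) / Real.log 2 ≤
      (c x v * p x y) * LCf p α x y - (c x v * p x y) * LMf p c v y := by
    intro x y v
    by_cases hw : c x v * p x y = 0
    · rw [hw, zero_mul, zero_mul, sub_zero, zero_sub]
      exact div_nonpos_of_nonpos_of_nonneg (neg_nonpos.mpr (hsnn x y v)) hlog2.le
    · have hcpos : 0 < c x v := (hcnn x v).lt_of_ne (Ne.symm (left_ne_zero_of_mul hw))
      have hppos : 0 < p x y := (hpnn x y).lt_of_ne (Ne.symm (right_ne_zero_of_mul hw))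
      have hpX : 0 < pXf p x :=
        hppos.trans_le (Finset.single_le_sum (fun y' _ => hpnn x y') (mem_univ y))
      have hpY : 0 < pYf p y :=
        hppos.trans_le (Finset.single_le_sum (fun x' _ => hpnn x' y) (mem_univ x))
      have hq : 0 < qf p c v y := (mul_pos hcpos hppos).trans_le
        (Finset.single_le_sum (fun x' _ => mul_nonneg (hcnn x' v) (hpnn x' y)) (mem_univ x))
      have hqV : 0 < qVf p c v :=
        hq.trans_le (Finset.single_le_sum (fun y' _ => hqnn v y') (mem_univ y))
      have hpA : 0 < pAf p α (restr α x) := by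
        refine hpX.trans_le ?_
        have := Finset.single_le_sum
          (f := fun x' => if restr α x' = restr α x then pXf p x' else 0)
          (fun x' _ => by split_ifs; exacts [hpXnn x', le_refl 0]) (mem_univ x)
        simpa [pAf] using this
      have hpYA : 0 < pYAf p α y (restr α x) := by
        refine hppos.trans_le ?_
        have := Finset.single_le_sum
          (f := fun x' => if restr α x' = restr α x then p x' y else 0)
          (fun x' _ => by split_ifs; exacts [hpnn x' y, le_refl 0]) (mem_univ x)
        simpa [pYAf] using this
      set X' := (p x y * pAf p α (restr α x)) / (pYAf p α y (restr α x) * pXf p x) with hX'def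
      set Y' := qf p c v y / (qVf p c v * pYf p y) with hY'def
      have hX' : 0 < X' := div_pos (mul_pos hppos hpA) (mul_pos hpYA hpX)
      have hY' : 0 < Y' := div_pos hq (mul_pos hqV hpY)
      have hZ : 0 < X' / Y' := div_pos hX' hY'
      have hLC : LCf p α x y = Real.logb 2 X' := rfl
      have hLM : LMf p c v y = Real.logb 2 Y' := rfl
      have hdiff : LCf p α x y - LMf p c v y = Real.logb 2 (X' / Y') := by
        rw [hLC, hLM, Real.logb_div hX'.ne' hY'.ne']
      have hlog := logb_two_ge hZ
      have hs : sf p α c x y v = (c x v * p x y) * (X' / Y')⁻¹ := by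
        show c x v * pXf p x * pYAf p α y (restr α x) * qf p c v y /
          (pAf p α (restr α x) * qVf p c v * pYf p y) = _
        rw [hX'def, hY'def]
        field_simp
      calc (c x v * p x y - sf p α c x y v) / Real.log 2
          = (c x v * p x y) * ((1 - (X' / Y')⁻¹) / Real.log 2) := by
            rw [hs]; field_simp
        _ ≤ (c x v * p x y) * Real.logb 2 (X' / Y') :=
            mul_le_mul_of_nonneg_left hlog (mul_pos hcpos hppos).le
        _ = (c x v * p x y) * LCf p α x y - (c x v * p x y) * LMf p c v y := by
            rw [← hdiff, mul_sub]
  -- STEP 6 : independence consequence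
  have hF3 : ∀ v a, (∑ x, if restr α x = a then c x v * pXf p x else 0)
      = qVf p c v * pAf p α a := by
    intro v a
    have h : (∑ x, if restr α x = a then c x v * (∑ y, p x y) else 0) =
        (∑ x, c x v * (∑ y, p x y)) *
          (∑ v', ∑ x, if restr α x = a then c x v' * (∑ y, p x y) else 0) := by
      have h0 := hind v a
      convert h0 using 2 <;> congr!
    have h1 : (∑ x, c x v * (∑ y, p x y)) = qVf p c v := by
      show _ = ∑ y, ∑ x, c x v * p x y
      rw [Finset.sum_comm]
      apply Finset.sum_congr rfl; intro x _
      rw [Finset.mul_sum]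
    have h2 : (∑ v', ∑ x, if restr α x = a then c x v' * (∑ y, p x y) else 0)
        = pAf p α a := by
      rw [Finset.sum_comm]
      apply Finset.sum_congr rfl; intro x _
      by_cases hxa : restr α x = a
      · simp only [if_pos hxa]
        rw [← Finset.sum_mul, hcrow x, one_mul]
        rfl
      · simp only [if_neg hxa, Finset.sum_const_zero]
    rw [h1, h2] at h
    exact h
  -- STEP 7 : total mass of s is at most 1
  have hpYAtot : ∀ y, ∑ a, pYAf p α y a = pYf p y := by
    intro y
    show (∑ a, ∑ x, if restr α x = a then p x y else 0) = ∑ x, p x y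
    rw [Finset.sum_comm]
    apply Finset.sum_congr rfl; intro x _
    rw [Finset.sum_ite_eq univ (restr α x) (fun _ => p x y)]
    simp
  have hsums : ∑ x, ∑ y, ∑ v, sf p α c x y v ≤ 1 := by
    have reord2 : ∑ x, ∑ y, ∑ v, sf p α c x y v = ∑ y, ∑ v, ∑ x, sf p α c x y v := by
      rw [Finset.sum_comm]
      apply Finset.sum_congr rfl; intro y _
      exact Finset.sum_comm
    rw [reord2]
    have hxbound : ∀ y v, ∑ x, sf p α c x y v ≤ pYf p y * (qf p c v y / pYf p y) := by
      intro y v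
      have hfib : ∑ x, sf p α c x y v =
          ∑ a, ∑ x, (if restr α x = a then sf p α c x y v else 0) := by
        rw [Finset.sum_comm]
        apply Finset.sum_congr rfl; intro x _
        rw [Finset.sum_ite_eq univ (restr α x) (fun _ => sf p α c x y v)]
        simp
      rw [hfib]
      have hinner : ∀ a, (∑ x, if restr α x = a then sf p α c x y v else 0) =
          (qVf p c v * pAf p α a) * (pYAf p α y a * qf p c v y /
            (pAf p α a * qVf p c v * pYf p y)) := by
        intro a
        rw [← hF3 v a, Finset.sum_mul]
        apply Finset.sum_congr rfl; intro x _
        by_cases hxa : restr α x = a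
        · rw [if_pos hxa, if_pos hxa]
          show c x v * pXf p x * pYAf p α y (restr α x) * qf p c v y /
            (pAf p α (restr α x) * qVf p c v * pYf p y) = _
          rw [hxa]
          ring
        · rw [if_neg hxa, if_neg hxa, zero_mul]
      simp_rw [hinner]
      have hK : ∀ a, (qVf p c v * pAf p α a) * (pYAf p α y a * qf p c v y /
            (pAf p α a * qVf p c v * pYf p y)) ≤ pYAf p α y a * (qf p c v y / pYf p y) := by
        intro a
        by_cases h1 : pAf p α a = 0
        · rw [h1, mul_zero, zero_mul]
          exact mul_nonneg (hpYAnn y a) (div_nonneg (hqnn v y) (hpYnn y))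
        by_cases h2 : qVf p c v = 0
        · rw [h2, zero_mul, zero_mul]
          exact mul_nonneg (hpYAnn y a) (div_nonneg (hqnn v y) (hpYnn y))
        by_cases h3 : pYf p y = 0
        · have hL : (qVf p c v * pAf p α a) * (pYAf p α y a * qf p c v y /
              (pAf p α a * qVf p c v * pYf p y)) = 0 := by
            rw [h3, mul_zero, div_zero, mul_zero]
          rw [hL]
          exact mul_nonneg (hpYAnn y a) (div_nonneg (hqnn v y) (hpYnn y))
        · apply le_of_eq
          field_simp
      calc ∑ a, (qVf p c v * pAf p α a) * (pYAf p α y a * qf p c v y /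
            (pAf p α a * qVf p c v * pYf p y))
          ≤ ∑ a, pYAf p α y a * (qf p c v y / pYf p y) :=
            Finset.sum_le_sum (fun a _ => hK a)
        _ = pYf p y * (qf p c v y / pYf p y) := by
            rw [← Finset.sum_mul, hpYAtot y]
    have hvbound : ∀ y, ∑ v, ∑ x, sf p α c x y v ≤ pYf p y := by
      intro y
      calc ∑ v, ∑ x, sf p α c x y v
          ≤ ∑ v, pYf p y * (qf p c v y / pYf p y) :=
            Finset.sum_le_sum (fun v _ => hxbound y v)
        _ ≤ pYf p y := by
          by_cases h3 : pYf p y = 0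
          · simp [h3]
          · have hcancel : ∀ v, pYf p y * (qf p c v y / pYf p y) = qf p c v y := by
              intro v; field_simp
            simp_rw [hcancel]
            exact le_of_eq (hqY y)
    calc ∑ y, ∑ v, ∑ x, sf p α c x y v ≤ ∑ y, pYf p y :=
          Finset.sum_le_sum (fun y _ => hvbound y)
      _ = 1 := by
          rw [show (∑ y, pYf p y) = ∑ x, ∑ y, p x y from Finset.sum_comm]
          exact hp.2
  -- STEP 8 : total weight is 1
  have hw1 : ∑ x, ∑ y, ∑ v, (c x v * p x y) = 1 := by
    have hcollapse : ∀ x y, ∑ v, c x v * p x y = p x y := by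
      intro x y; rw [← Finset.sum_mul, hcrow, one_mul]
    simp_rw [hcollapse]
    exact hp.2
  -- STEP 9 : conclusion
  rw [hMI, hMI3, hCMI, hCMI3, ← sub_nonneg]
  have hsplit : ∑ x, ∑ y, ∑ v, (c x v * p x y) * LCf p α x y -
      ∑ x, ∑ y, ∑ v, (c x v * p x y) * LMf p c v y =
      ∑ x, ∑ y, ∑ v, ((c x v * p x y) * LCf p α x y - (c x v * p x y) * LMf p c v y) := by
    simp only [← Finset.sum_sub_distrib]
  rw [hsplit]
  have heq : ∑ x, ∑ y, ∑ v, ((c x v * p x y - sf p α c x y v) / Real.log 2) =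
      (∑ x, ∑ y, ∑ v, (c x v * p x y) - ∑ x, ∑ y, ∑ v, sf p α c x y v) / Real.log 2 := by
    simp only [← Finset.sum_div, ← Finset.sum_sub_distrib]
  have hge : (∑ x, ∑ y, ∑ v, (c x v * p x y) - ∑ x, ∑ y, ∑ v, sf p α c x y v) / Real.log 2 ≤
      ∑ x, ∑ y, ∑ v, ((c x v * p x y) * LCf p α x y - (c x v * p x y) * LMf p c v y) := by
    rw [← heq]
    exact Finset.sum_le_sum (fun x _ => Finset.sum_le_sum (fun y _ =>
      Finset.sum_le_sum (fun v _ => hterm x y v)))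
  have h0 : 0 ≤ (∑ x, ∑ y, ∑ v, (c x v * p x y) - ∑ x, ∑ y, ∑ v, sf p α c x y v) /
      Real.log 2 := by
    apply div_nonneg _ hlog2.le
    rw [hw1]
    linarith [hsums]
  linarith

end Key


/-- `S^𝛂(X → Y) ≤ min_{α ∈ 𝛂} I(Y; X^{-α} | X^α)`. -/
theorem syn_le_min_cmi
    {n : ℕ} {𝓧 : Fin n → Type*} [∀ i, Fintype (𝓧 i)] {Y : Type*} [Fintype Y]
    (p : (∀ i, 𝓧 i) → Y → ℝ) (hp : IsJoint p)
    (A : Finset (Finset (Fin n))) (hA : A.Nonempty) :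
    Syn p A ≤ A.inf' hA (fun α =>
      CMI (fun (y : Y) (b : ∀ i : ↥αᶜ, 𝓧 i.1) (a : ∀ i : ↥α, 𝓧 i.1) =>
        ∑ x, if restr αᶜ x = b ∧ restr α x = a then p x y else 0)) := by
  apply Finset.le_inf' hA
  intro α hα
  apply Real.sSup_le
  · rintro r ⟨k, c, hc, hind, rfl⟩
    exact key_lemma p α c hp hc (hind α hα)
  · apply CMI_nonneg
    intro y b a
    exact Finset.sum_nonneg fun x _ => by split_ifs; exacts [hp.1 x y, le_refl 0]
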